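/- arXiv:0811.3109 — 2 statements merged into one kernel-verified Lean document; each statement's English description precedes it below -/
import Mathlib

section
/- Let G be a group, A a G-module, and suppose there exists an element σ in the center of G acting on A as multiplication by -1. Then multiplication by 2 annihilates the first cohomology group H^1(G, A). -/
theorem sah_aux {k : Type} [CommRing k] {G : Type} [Group G] (A : Rep k G) (σ : G)
    (hσ : σ ∈ Subgroup.center G) (hact : ∀ a : A, A.ρ σ a = -a) :
    ∀ x : groupCohomology.H1 A, x + x = 0 := by
  intro x
  induction x using groupCohomology.H1_induction_on with
  | h f =>
  have hmem : ⇑((2 : k) • f) ∈ groupCohomology.coboundaries₁ A := by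
    refine ⟨-(f.1 σ), funext fun g => ?_⟩
    have hc := (groupCohomology.mem_cocycles₁_iff f.1).1 f.2
    have h1 := hc g σ
    have h2 := hc σ g
    rw [← (Subgroup.mem_center_iff.1 hσ g)] at h2
    rw [h2, hact] at h1
    rw [groupCohomology.d₀₁_hom_apply]
    show A.ρ g (-(f.1 σ)) - -(f.1 σ) = ((2 : k) • f).1 g
    rw [map_neg]
    show -(A.ρ g (f.1 σ)) - -(f.1 σ) = (2 : k) • (f.1 g)
    rw [two_smul]
    linear_combination (norm := module) h1
  rw [← map_add, groupCohomology.H1π_eq_zero_iff]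
  have : f + f = (2 : k) • f := (two_smul k f).symm
  rw [this]
  exact hmem

/-- **Sah's lemma.** If a `G`-module `A` admits a central element
`σ` of `G` acting as multiplication by `-1`, then `2` annihilates `H¹(G, A)`. -/
theorem stmt_1 {G : Type} [Group G] (A : Rep ℤ G) (σ : G)
    (hσ : σ ∈ Subgroup.center G) (hact : ∀ a : A, A.ρ σ a = -a) :
    ∀ x : groupCohomology.H1 A, (2 : ℤ) • x = 0 := by
  intro x
  rw [two_zsmul]
  exact sah_aux A σ hσ hact x
end

section
/- Let ℓ be a prime, N ≥ 0, and let H ≤ SL₂(ℤ_ℓ) be the subgroup generated by the elementary matrices (1, β; 0, 1) and (1, 0; β, 1) for β ∈ ℓ^N ℤ_ℓ. Then H contains the principal congruence subgroup Γ(ℓ^{2N}) consisting of matrices congruent to the identity modulo ℓ^{2N}. -/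
open Matrix

private lemma decomp_mat {R : Type*} [CommRing R] (a b c d a' v w : R)
    (ha : a * a' = 1) (hvw : v * w = a - 1) (hdet : a * d - b * c = 1) :
    !![a, b; c, d] =
      !![1, 0; (c - w) * a', 1] * !![1, v; 0, 1] * !![1, 0; w, 1] *
        !![1, (b - v) * a'; 0, 1] := by
  simp only [Matrix.mul_fin_two]
  ext i j
  fin_cases i <;> fin_cases j <;> simp
  · linear_combination -hvw
  · linear_combination (v - b) * ha + ((v - b) * a') * hvw
  · linear_combination (w - c) * ha + ((w - c) * a') * hvw
  · linear_combination ((1 - d) - a'*(c-w)*(b-v)) * ha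
      + (a' - a'*a'*(c-w)*(b-v)) * hvw + a' * hdet

private noncomputable def Eu {ℓ : ℕ} [Fact ℓ.Prime] (β : ℤ_[ℓ]) :
    Matrix.SpecialLinearGroup (Fin 2) ℤ_[ℓ] :=
  ⟨!![1, β; 0, 1], by simp [Matrix.det_fin_two_of]⟩

private noncomputable def El {ℓ : ℕ} [Fact ℓ.Prime] (β : ℤ_[ℓ]) :
    Matrix.SpecialLinearGroup (Fin 2) ℤ_[ℓ] :=
  ⟨!![1, 0; β, 1], by simp [Matrix.det_fin_two_of]⟩

private lemma mem_of_unit (ℓ : ℕ) [Fact ℓ.Prime] (N : ℕ)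
    (M : Matrix.SpecialLinearGroup (Fin 2) ℤ_[ℓ])
    (ha : IsUnit ((M : Matrix (Fin 2) (Fin 2) ℤ_[ℓ]) 0 0))
    (hb : ((ℓ : ℤ_[ℓ]) ^ N) ∣ (M : Matrix (Fin 2) (Fin 2) ℤ_[ℓ]) 0 1)
    (hc : ((ℓ : ℤ_[ℓ]) ^ N) ∣ (M : Matrix (Fin 2) (Fin 2) ℤ_[ℓ]) 1 0)
    (ha1 : ((ℓ : ℤ_[ℓ]) ^ (2 * N)) ∣ (M : Matrix (Fin 2) (Fin 2) ℤ_[ℓ]) 0 0 - 1) :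
    M ∈ Subgroup.closure
      {g : Matrix.SpecialLinearGroup (Fin 2) ℤ_[ℓ] |
        ∃ β : ℤ_[ℓ], ((ℓ : ℤ_[ℓ]) ^ N) ∣ β ∧
          ((g : Matrix (Fin 2) (Fin 2) ℤ_[ℓ]) = !![1, β; 0, 1] ∨
           (g : Matrix (Fin 2) (Fin 2) ℤ_[ℓ]) = !![1, 0; β, 1])} := by
  set a := (M : Matrix (Fin 2) (Fin 2) ℤ_[ℓ]) 0 0 with ha_def
  set b := (M : Matrix (Fin 2) (Fin 2) ℤ_[ℓ]) 0 1 with hb_def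
  set c := (M : Matrix (Fin 2) (Fin 2) ℤ_[ℓ]) 1 0 with hc_def
  set d := (M : Matrix (Fin 2) (Fin 2) ℤ_[ℓ]) 1 1 with hd_def
  obtain ⟨a', ha'⟩ := isUnit_iff_exists_inv.mp ha
  obtain ⟨s, hs⟩ := ha1
  set v : ℤ_[ℓ] := (ℓ : ℤ_[ℓ]) ^ N with hv_def
  set w : ℤ_[ℓ] := (ℓ : ℤ_[ℓ]) ^ N * s with hw_def
  have hvw : v * w = a - 1 := by
    rw [hv_def, hw_def, ← mul_assoc, ← pow_add, ← two_mul, ← hs]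
  have hdet : a * d - b * c = 1 := by
    have := M.2
    rwa [Matrix.det_fin_two] at this
  have key : M = El ((c - w) * a') * Eu v * El w * Eu ((b - v) * a') := by
    apply Subtype.ext
    push_cast [El, Eu]
    rw [Matrix.eta_fin_two (M : Matrix (Fin 2) (Fin 2) ℤ_[ℓ])]
    exact decomp_mat a b c d a' v w ha' hvw hdet
  rw [key]
  have hmemu : ∀ β : ℤ_[ℓ], ((ℓ : ℤ_[ℓ]) ^ N) ∣ β → Eu β ∈ Subgroup.closure
      {g : Matrix.SpecialLinearGroup (Fin 2) ℤ_[ℓ] |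
        ∃ β : ℤ_[ℓ], ((ℓ : ℤ_[ℓ]) ^ N) ∣ β ∧
          ((g : Matrix (Fin 2) (Fin 2) ℤ_[ℓ]) = !![1, β; 0, 1] ∨
           (g : Matrix (Fin 2) (Fin 2) ℤ_[ℓ]) = !![1, 0; β, 1])} :=
    fun β hβ => Subgroup.subset_closure ⟨β, hβ, Or.inl rfl⟩
  have hmeml : ∀ β : ℤ_[ℓ], ((ℓ : ℤ_[ℓ]) ^ N) ∣ β → El β ∈ Subgroup.closure
      {g : Matrix.SpecialLinearGroup (Fin 2) ℤ_[ℓ] |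
        ∃ β : ℤ_[ℓ], ((ℓ : ℤ_[ℓ]) ^ N) ∣ β ∧
          ((g : Matrix (Fin 2) (Fin 2) ℤ_[ℓ]) = !![1, β; 0, 1] ∨
           (g : Matrix (Fin 2) (Fin 2) ℤ_[ℓ]) = !![1, 0; β, 1])} :=
    fun β hβ => Subgroup.subset_closure ⟨β, hβ, Or.inr rfl⟩
  have hw_dvd : ((ℓ : ℤ_[ℓ]) ^ N) ∣ w := ⟨s, rfl⟩
  exact mul_mem (mul_mem (mul_mem
    (hmeml _ ((hc.sub hw_dvd).mul_right a'))
    (hmemu _ dvd_rfl))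
    (hmeml _ hw_dvd))
    (hmemu _ ((hb.sub ⟨1, (mul_one _).symm⟩).mul_right a'))

/-- The subgroup of `SL₂(ℤ_ℓ)` generated by the elementary
matrices `(1, β; 0, 1)` and `(1, 0; β, 1)` with `β ∈ ℓ^N ℤ_ℓ` contains the
principal congruence subgroup of level `ℓ^{2N}`. -/
theorem stmt_2 (ℓ : ℕ) [Fact ℓ.Prime] (N : ℕ)
    (M : Matrix.SpecialLinearGroup (Fin 2) ℤ_[ℓ])
    (hM : ∀ i j, ((ℓ : ℤ_[ℓ]) ^ (2 * N)) ∣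
      ((M : Matrix (Fin 2) (Fin 2) ℤ_[ℓ]) i j - (1 : Matrix (Fin 2) (Fin 2) ℤ_[ℓ]) i j)) :
    M ∈ Subgroup.closure
      {g : Matrix.SpecialLinearGroup (Fin 2) ℤ_[ℓ] |
        ∃ β : ℤ_[ℓ], ((ℓ : ℤ_[ℓ]) ^ N) ∣ β ∧
          ((g : Matrix (Fin 2) (Fin 2) ℤ_[ℓ]) = !![1, β; 0, 1] ∨
           (g : Matrix (Fin 2) (Fin 2) ℤ_[ℓ]) = !![1, 0; β, 1])} := by
  have hb2 : ((ℓ : ℤ_[ℓ]) ^ (2 * N)) ∣ (M : Matrix (Fin 2) (Fin 2) ℤ_[ℓ]) 0 1 := by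
    simpa using hM 0 1
  have hc2 : ((ℓ : ℤ_[ℓ]) ^ (2 * N)) ∣ (M : Matrix (Fin 2) (Fin 2) ℤ_[ℓ]) 1 0 := by
    simpa using hM 1 0
  have ha2 : ((ℓ : ℤ_[ℓ]) ^ (2 * N)) ∣ (M : Matrix (Fin 2) (Fin 2) ℤ_[ℓ]) 0 0 - 1 := by
    simpa using hM 0 0
  have hpow : ((ℓ : ℤ_[ℓ]) ^ N) ∣ ((ℓ : ℤ_[ℓ]) ^ (2 * N)) := pow_dvd_pow _ (by omega)
  by_cases ha : IsUnit ((M : Matrix (Fin 2) (Fin 2) ℤ_[ℓ]) 0 0)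
  · exact mem_of_unit ℓ N M ha (hpow.trans hb2) (hpow.trans hc2) ha2
  · -- the (0,0) entry is a non-unit; this forces N = 0
    have hnorm : ‖(M : Matrix (Fin 2) (Fin 2) ℤ_[ℓ]) 0 0‖ < 1 :=
      lt_of_le_of_ne ((M : Matrix (Fin 2) (Fin 2) ℤ_[ℓ]) 0 0).2
        (fun h => ha (PadicInt.isUnit_iff.mpr h))
    have hldvd : (ℓ : ℤ_[ℓ]) ∣ (M : Matrix (Fin 2) (Fin 2) ℤ_[ℓ]) 0 0 :=
      (PadicInt.norm_lt_one_iff_dvd _).mp hnorm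
    have hN : N = 0 := by
      by_contra hN
      have h1 : (ℓ : ℤ_[ℓ]) ∣ (M : Matrix (Fin 2) (Fin 2) ℤ_[ℓ]) 0 0 - 1 :=
        (dvd_pow_self (ℓ : ℤ_[ℓ]) (by omega : 2 * N ≠ 0)).trans ha2
      have : (ℓ : ℤ_[ℓ]) ∣ 1 := by
        have := hldvd.sub h1
        simpa using this
      have hu : IsUnit (ℓ : ℤ_[ℓ]) := isUnit_of_dvd_one this
      have := PadicInt.isUnit_iff.mp hu
      rw [PadicInt.norm_p] at this
      have hl2 : 2 ≤ ℓ := (Fact.out : ℓ.Prime).two_le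
      have : (2:ℝ) ≤ (ℓ:ℝ) := by exact_mod_cast hl2
      have : (ℓ:ℝ)⁻¹ < 1 := by
        rw [inv_lt_one_iff₀]; right; linarith
      simp_all
    subst hN
    -- c is a unit (from the determinant), so a + c is a unit
    have hdet : (M : Matrix (Fin 2) (Fin 2) ℤ_[ℓ]) 0 0 * (M : Matrix (Fin 2) (Fin 2) ℤ_[ℓ]) 1 1
        - (M : Matrix (Fin 2) (Fin 2) ℤ_[ℓ]) 0 1 * (M : Matrix (Fin 2) (Fin 2) ℤ_[ℓ]) 1 0 = 1 := by
      have := M.2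
      rwa [Matrix.det_fin_two] at this
    have hcunit : IsUnit ((M : Matrix (Fin 2) (Fin 2) ℤ_[ℓ]) 1 0) := by
      by_contra hcu
      have h1mem : (1 : ℤ_[ℓ]) ∈ IsLocalRing.maximalIdeal ℤ_[ℓ] := by
        rw [← hdet]
        exact Ideal.sub_mem _
          (Ideal.mul_mem_right _ _ ((IsLocalRing.mem_maximalIdeal _).mpr (mem_nonunits_iff.mpr ha)))
          (Ideal.mul_mem_left _ _ ((IsLocalRing.mem_maximalIdeal _).mpr (mem_nonunits_iff.mpr hcu)))
      exact (IsLocalRing.maximalIdeal.isMaximal ℤ_[ℓ]).ne_top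
        (Ideal.eq_top_of_isUnit_mem _ h1mem isUnit_one)
    have hsum : IsUnit ((M : Matrix (Fin 2) (Fin 2) ℤ_[ℓ]) 0 0 + (M : Matrix (Fin 2) (Fin 2) ℤ_[ℓ]) 1 0) := by
      by_contra hsu
      have hmem : (M : Matrix (Fin 2) (Fin 2) ℤ_[ℓ]) 1 0 ∈ IsLocalRing.maximalIdeal ℤ_[ℓ] := by
        have : (M : Matrix (Fin 2) (Fin 2) ℤ_[ℓ]) 1 0 =
            ((M : Matrix (Fin 2) (Fin 2) ℤ_[ℓ]) 0 0 + (M : Matrix (Fin 2) (Fin 2) ℤ_[ℓ]) 1 0)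
              - (M : Matrix (Fin 2) (Fin 2) ℤ_[ℓ]) 0 0 := by ring
        rw [this]
        exact Ideal.sub_mem _
          ((IsLocalRing.mem_maximalIdeal _).mpr (mem_nonunits_iff.mpr hsu))
          ((IsLocalRing.mem_maximalIdeal _).mpr (mem_nonunits_iff.mpr ha))
      exact mem_nonunits_iff.mp ((IsLocalRing.mem_maximalIdeal _).mp hmem) hcunit
    -- multiply by Eu 1 on the left to make the (0,0) entry a unit
    have hentry : ((Eu (ℓ := ℓ) 1 * M : Matrix.SpecialLinearGroup (Fin 2) ℤ_[ℓ]) :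
        Matrix (Fin 2) (Fin 2) ℤ_[ℓ]) = !![1,1;0,1] * (M : Matrix (Fin 2) (Fin 2) ℤ_[ℓ]) := by
      rw [Matrix.SpecialLinearGroup.coe_mul]; rfl
    have h00 : ((Eu (ℓ := ℓ) 1 * M : Matrix.SpecialLinearGroup (Fin 2) ℤ_[ℓ]) :
        Matrix (Fin 2) (Fin 2) ℤ_[ℓ]) 0 0 =
        (M : Matrix (Fin 2) (Fin 2) ℤ_[ℓ]) 0 0 + (M : Matrix (Fin 2) (Fin 2) ℤ_[ℓ]) 1 0 := by
      rw [hentry]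
      rw [Matrix.eta_fin_two (M : Matrix (Fin 2) (Fin 2) ℤ_[ℓ]), Matrix.mul_fin_two]
      simp
    have hmem' : Eu (ℓ := ℓ) 1 * M ∈ Subgroup.closure
        {g : Matrix.SpecialLinearGroup (Fin 2) ℤ_[ℓ] |
          ∃ β : ℤ_[ℓ], ((ℓ : ℤ_[ℓ]) ^ 0) ∣ β ∧
            ((g : Matrix (Fin 2) (Fin 2) ℤ_[ℓ]) = !![1, β; 0, 1] ∨
             (g : Matrix (Fin 2) (Fin 2) ℤ_[ℓ]) = !![1, 0; β, 1])} := by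
      apply mem_of_unit ℓ 0 (Eu 1 * M) (h00 ▸ hsum) <;> simp
    have hgen : Eu (ℓ := ℓ) 1 ∈ Subgroup.closure
        {g : Matrix.SpecialLinearGroup (Fin 2) ℤ_[ℓ] |
          ∃ β : ℤ_[ℓ], ((ℓ : ℤ_[ℓ]) ^ 0) ∣ β ∧
            ((g : Matrix (Fin 2) (Fin 2) ℤ_[ℓ]) = !![1, β; 0, 1] ∨
             (g : Matrix (Fin 2) (Fin 2) ℤ_[ℓ]) = !![1, 0; β, 1])} :=
      Subgroup.subset_closure ⟨1, by simp, Or.inl rfl⟩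
    have : M = (Eu (ℓ := ℓ) 1)⁻¹ * (Eu 1 * M) := by group
    rw [this]
    exact mul_mem (inv_mem hgen) hmem'
end
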